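/- Let a ≥ 1 be a real number and let f: {0,1}^n → ℝ be a nonnegative a-self-bounding function. Then the total ℓ_1-influence satisfies Inf^1(f) = Σ_{i=1}^n E[|∂_i f|] ≤ a · ‖f‖_1. In particular, if f has range contained in [0,1], then Inf^1(f) ≤ a. -/
import Mathlib


noncomputable section

/-- A function `f : {0,1}^n → ℝ` is `a`-self-bounding. -/
def SelfBounding (n : ℕ) (a : ℝ) (f : (Fin n → Bool) → ℝ) : Prop :=
  ∀ x : Fin n → Bool,
    (∀ i : Fin n,
      f x - min (f (Function.update x i false)) (f (Function.update x i true)) ≤ 1) ∧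
    ∑ i : Fin n,
      (f x - min (f (Function.update x i false)) (f (Function.update x i true))) ≤ a * f x

/-- Expectation with respect to the uniform distribution on `{0,1}^n`. -/
def expect (n : ℕ) (g : (Fin n → Bool) → ℝ) : ℝ :=
  (∑ x : Fin n → Bool, g x) / 2 ^ n

/-- Discrete derivative `∂ᵢ f(x) = (f(x_{i←1}) − f(x_{i←0}))/2`. -/
def dderiv (n : ℕ) (f : (Fin n → Bool) → ℝ) (i : Fin n) (x : Fin n → Bool) : ℝ :=
  (f (Function.update x i true) - f (Function.update x i false)) / 2

theorem selfbounding_total_l1_influence (n : ℕ) (a : ℝ) (ha : 1 ≤ a)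
    (f : (Fin n → Bool) → ℝ) (hf0 : ∀ x, 0 ≤ f x) (hf : SelfBounding n a f) :
    (∑ i : Fin n, expect n (fun x => |dderiv n f i x|)) ≤ a * expect n (fun x => |f x|) ∧
      ((∀ x, f x ≤ 1) → (∑ i : Fin n, expect n (fun x => |dderiv n f i x|)) ≤ a) := by
  have habs : (fun x => |f x|) = f := funext fun x => abs_of_nonneg (hf0 x)
  set g : Fin n → (Fin n → Bool) → ℝ := fun i x =>
    f x - min (f (Function.update x i false)) (f (Function.update x i true)) with hg
  have key : ∀ i : Fin n, (∑ x : Fin n → Bool, |dderiv n f i x|) =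
      ∑ x : Fin n → Bool, g i x := by
    intro i
    have inv : Function.Involutive (fun x : Fin n → Bool => Function.update x i (!x i)) := by
      intro x
      simp [Function.update_idem, Function.update_self, Function.update_eq_self]
    set σ := inv.toPerm with hσ
    have hσx : ∀ x, σ x = Function.update x i (!x i) := fun x => rfl
    have e1 : ∑ x : Fin n → Bool, |dderiv n f i (σ x)| =
        ∑ x : Fin n → Bool, |dderiv n f i x| :=
      Equiv.sum_comp σ (fun x => |dderiv n f i x|)
    have e2 : ∑ x : Fin n → Bool, g i (σ x) = ∑ x : Fin n → Bool, g i x :=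
      Equiv.sum_comp σ (g i)
    have hpt : ∀ x : Fin n → Bool,
        |dderiv n f i x| + |dderiv n f i (σ x)| = g i x + g i (σ x) := by
      intro x
      have hu : ∀ b, Function.update (σ x) i b = Function.update x i b := by
        intro b; rw [hσx]; exact Function.update_idem ..
      have hx : Function.update x i (x i) = x := Function.update_eq_self i x
      cases hxi : x i with
      | false =>
        have hfx : f x = f (Function.update x i false) := by rw [← hxi, hx]
        have hfσ : f (σ x) = f (Function.update x i true) := by
          rw [hσx, hxi]; norm_num
        simp only [hg, dderiv, hu, ← hfx, ← hfσ]
        rw [hfx, hfσ]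
        rcases le_total (f (Function.update x i false)) (f (Function.update x i true)) with h | h
        · rw [min_eq_left h, abs_of_nonneg (by linarith)]; ring
        · rw [min_eq_right h, abs_of_nonpos (by linarith)]; ring
      | true =>
        have hfx : f x = f (Function.update x i true) := by rw [← hxi, hx]
        have hfσ : f (σ x) = f (Function.update x i false) := by
          rw [hσx, hxi]; norm_num
        simp only [hg, dderiv, hu]
        rw [hfx, hfσ]
        rcases le_total (f (Function.update x i false)) (f (Function.update x i true)) with h | h
        · rw [min_eq_left h, abs_of_nonneg (by linarith)]; ring
        · rw [min_eq_right h, abs_of_nonpos (by linarith)]; ring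
    have : (2:ℝ) * (∑ x : Fin n → Bool, |dderiv n f i x|) =
        2 * ∑ x : Fin n → Bool, g i x := by
      rw [two_mul, two_mul]
      calc (∑ x : Fin n → Bool, |dderiv n f i x|) + ∑ x : Fin n → Bool, |dderiv n f i x|
          = ∑ x : Fin n → Bool, (|dderiv n f i x| + |dderiv n f i (σ x)|) := by
            rw [Finset.sum_add_distrib, e1]
        _ = ∑ x : Fin n → Bool, (g i x + g i (σ x)) := Finset.sum_congr rfl fun x _ => hpt x
        _ = (∑ x : Fin n → Bool, g i x) + ∑ x : Fin n → Bool, g i x := by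
            rw [Finset.sum_add_distrib, e2]
    linarith
  have h2 : (0:ℝ) < 2 ^ n := by positivity
  have main : (∑ i : Fin n, expect n (fun x => |dderiv n f i x|)) ≤
      a * expect n (fun x => |f x|) := by
    simp only [expect, habs]
    rw [← Finset.sum_div, ← mul_div_assoc]
    gcongr ?_ / _
    calc (∑ i : Fin n, ∑ x : Fin n → Bool, |dderiv n f i x|)
        = ∑ i : Fin n, ∑ x : Fin n → Bool, g i x := Finset.sum_congr rfl fun i _ => key i
      _ = ∑ x : Fin n → Bool, ∑ i : Fin n, g i x := Finset.sum_comm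
      _ ≤ ∑ x : Fin n → Bool, a * f x := Finset.sum_le_sum fun x _ => (hf x).2
      _ = a * ∑ x : Fin n → Bool, f x := (Finset.mul_sum _ _ _).symm
  refine ⟨main, fun hle => ?_⟩
  have hE : expect n (fun x => |f x|) ≤ 1 := by
    simp only [expect, habs]
    rw [div_le_one h2]
    calc (∑ x : Fin n → Bool, f x) ≤ ∑ x : Fin n → Bool, (1:ℝ) :=
          Finset.sum_le_sum fun x _ => hle x
      _ = 2 ^ n := by simp [Finset.card_univ]
  calc (∑ i : Fin n, expect n (fun x => |dderiv n f i x|)) ≤ a * expect n (fun x => |f x|) := main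
    _ ≤ a * 1 := mul_le_mul_of_nonneg_left hE (by linarith)
    _ = a := mul_one a
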